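/- Let n > k > 0 be integers and let F be a pointwise-increasing family of k-element subsets of [n]. Then U_B(F) = {x ∈ [n] : Alice(F_x^+)} is an upper interval of [n] (i.e., if x ∈ U_B(F) and x ≤ y ≤ n then y ∈ U_B(F)), and L_B(F) = {x ∈ [n] : Alice(F_x^-)} is a lower interval of [n] (i.e., if x ∈ L_B(F) and 1 ≤ y ≤ x then y ∈ L_B(F)). -/

import Mathlib

/-- The board `[n] = {1, …, n}` as a finite set of natural numbers. -/
def board (n : ℕ) : Finset ℕ := Finset.Icc 1 n

/-- The order-preserving relabelling of `[n] \ {x}` onto `[n-1]`: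
elements below `x` are unchanged, elements above `x` drop by one. -/
def stdElt (x r : ℕ) : ℕ := if r < x then r else r - 1

/-- Standardise a set avoiding `x`: relabel it via `stdElt x`. -/
def stdSet (x : ℕ) (S : Finset ℕ) : Finset ℕ := S.image (stdElt x)

/-- The standardised section `F_x^+ = { S \ {x} : x ∈ S ∈ F }`,
viewed as a family of subsets of `[n-1]`. -/
def secPlus (F : Set (Finset ℕ)) (x : ℕ) : Set (Finset ℕ) :=
  {T | ∃ S ∈ F, x ∈ S ∧ T = stdSet x (S.erase x)}

/-- The standardised section `F_x^- = { S ∈ F : x ∉ S }`,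
viewed as a family of subsets of `[n-1]`. -/
def secMinus (F : Set (Finset ℕ)) (x : ℕ) : Set (Finset ℕ) :=
  {T | ∃ S ∈ F, x ∉ S ∧ T = stdSet x S}

mutual
  /-- `AliceWins n k F`: Alice wins her `F`-game, where `F` is a family of
  `k`-subsets of `[n]`.  Terminal games (`k = 0` or `k = n`) are won iff `F`
  is nonempty; otherwise Alice needs a first offer `x` such that Bob wins both
  his `F_x^+`-game and his `F_x^-`-game. -/
  def AliceWins (n k : ℕ) (F : Set (Finset ℕ)) : Prop :=
    if h : k = 0 ∨ n ≤ k then F.Nonempty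
    else ∃ x ∈ board n,
      BobWins (n - 1) (k - 1) (secPlus F x) ∧ BobWins (n - 1) k (secMinus F x)
  termination_by n
  decreasing_by all_goals omega

  /-- `BobWins n k F`: Bob wins his `F`-game, where `F` is a family of
  `k`-subsets of `[n]`.  Terminal games (`k = 0` or `k = n`) are won iff `F`
  is nonempty; otherwise Bob needs, for every first offer `x`, that Alice wins
  her `F_x^+`-game or her `F_x^-`-game. -/
  def BobWins (n k : ℕ) (F : Set (Finset ℕ)) : Prop :=
    if h : k = 0 ∨ n ≤ k then F.Nonempty
    else ∀ x ∈ board n,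
      AliceWins (n - 1) (k - 1) (secPlus F x) ∨ AliceWins (n - 1) k (secMinus F x)
  termination_by n
  decreasing_by all_goals omega
end

/-- `S ⪯ T` in the pointwise order: the increasing enumerations of `S` and `T`
have the same length and are pointwise `≤`. -/
def PointwiseLE (S T : Finset ℕ) : Prop :=
  List.Forall₂ (· ≤ ·) (S.sort (· ≤ ·)) (T.sort (· ≤ ·))

/-- `F` consists of `k`-element subsets of `[n]`. -/
def IsFamilyOn (n k : ℕ) (F : Set (Finset ℕ)) : Prop :=
  ∀ S ∈ F, S ⊆ board n ∧ S.card = k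

/-- `F` is pointwise-increasing as a family of `k`-subsets of `[n]`:
it is upwards closed in the pointwise order. -/
def IsIncreasingFamily (n k : ℕ) (F : Set (Finset ℕ)) : Prop :=
  ∀ S T : Finset ℕ, S ∈ F → T ⊆ board n → T.card = k → PointwiseLE S T → T ∈ F

def unstd (x r : ℕ) : ℕ := if r < x then r else r + 1

lemma unstd_strictMono (x : ℕ) : StrictMono (unstd x) := by
  intro a b h; unfold unstd; split_ifs <;> omega

lemma stdElt_unstd (x r : ℕ) : stdElt x (unstd x r) = r := by
  unfold stdElt unstd; split_ifs <;> omega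

lemma unstd_stdElt {x r : ℕ} (h : r ≠ x) : unstd x (stdElt x r) = r := by
  unfold stdElt unstd; split_ifs <;> omega

lemma unstd_ne (x r : ℕ) : unstd x r ≠ x := by unfold unstd; split_ifs <;> omega

lemma unstd_le_unstd {x y : ℕ} (h : y ≤ x) (r : ℕ) : unstd x r ≤ unstd y r := by
  unfold unstd; split_ifs <;> omega

lemma le_unstd (x r : ℕ) : r ≤ unstd x r := by unfold unstd; split_ifs <;> omega
lemma unstd_le (x r : ℕ) : unstd x r ≤ r + 1 := by unfold unstd; split_ifs <;> omega

lemma sort_image (s : Finset ℕ) (f : ℕ → ℕ) (hf : StrictMono f) :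
    (s.image f).sort (· ≤ ·) = (s.sort (· ≤ ·)).map f := by
  refine (fun hp h1 h2 => List.Perm.eq_of_pairwise' (r := (fun a b : ℕ => a ≤ b)) h1 h2 hp) ?_ ?_ ?_
  · apply Multiset.coe_eq_coe.mp
    rw [Finset.sort_eq, Finset.image_val_of_injOn (hf.injective.injOn)]
    show s.1.map f = ((s.sort (· ≤ ·)).map f : Multiset ℕ)
    rw [← Multiset.map_coe, Finset.sort_eq]
  · exact Finset.pairwise_sort _ _
  · exact List.Pairwise.map f (fun a b h => hf.monotone h) (Finset.pairwise_sort _ _)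

lemma sort_insert' (s : Finset ℕ) (a : ℕ) (h : a ∉ s) :
    ((insert a s).sort (· ≤ ·)) = (s.sort (· ≤ ·)).orderedInsert (· ≤ ·) a := by
  refine (fun hp h1 h2 => List.Perm.eq_of_pairwise' (r := (fun a b : ℕ => a ≤ b)) h1 h2 hp) ?_ ?_ ?_
  · refine List.Perm.trans ?_ (List.perm_orderedInsert _ _ _).symm
    apply Multiset.coe_eq_coe.mp
    rw [Finset.sort_eq, Finset.insert_val_of_notMem h]
    show (a ::ₘ s.1 : Multiset ℕ) = ((a :: s.sort (· ≤ ·) : List ℕ) : Multiset ℕ)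
    rw [← Multiset.cons_coe, Finset.sort_eq]
  · exact Finset.pairwise_sort _ _
  · exact List.Pairwise.orderedInsert _ _ (Finset.pairwise_sort _ _)

lemma forall2_map {f g : ℕ → ℕ} : ∀ (L : List ℕ), (∀ s ∈ L, f s ≤ g s) →
    List.Forall₂ (· ≤ ·) (L.map f) (L.map g)
  | [], _ => List.Forall₂.nil
  | t :: L, h => List.Forall₂.cons (h t (by simp))
      (forall2_map L (fun s hs => h s (by simp [hs])))

lemma unstd_eq_self {y t : ℕ} (h : t < y) : unstd y t = t := by
  unfold unstd; split_ifs <;> omega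

lemma unstd_eq_succ {y t : ℕ} (h : y ≤ t) : unstd y t = t + 1 := by
  unfold unstd; split_ifs <;> omega

lemma le_unstd_iff {y t : ℕ} : y ≤ unstd y t ↔ y ≤ t := by
  unfold unstd; split_ifs <;> omega

lemma map_le_map {x y : ℕ} : ∀ (L : List ℕ), (∀ s ∈ L, y ≤ s) →
    List.Forall₂ (· ≤ ·) (L.map (unstd x)) (L.map (unstd y)) := by
  intro L hL
  refine forall2_map _ (fun s hs => ?_)
  have h1 := unstd_le x s
  have h2 : unstd y s = s + 1 := unstd_eq_succ (hL s hs)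
  omega

lemma lemB : ∀ (M : List ℕ) (x y t : ℕ), t < y → (t :: M).Pairwise (· < ·) →
    List.Forall₂ (· ≤ ·) ((t :: M).map (unstd x))
      ((M.map (unstd y)).orderedInsert (· ≤ ·) y)
  | [], x, y, t, hty, _ => by
      simp only [List.map_cons, List.map_nil, List.orderedInsert]
      exact List.Forall₂.cons (by have := unstd_le x t; omega) List.Forall₂.nil
  | m :: M', x, y, t, hty, hs => by
      have htm : t < m := (List.pairwise_cons.mp hs).1 m (by simp)
      have hs' : (m :: M').Pairwise (· < ·) := (List.pairwise_cons.mp hs).2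
      simp only [List.map_cons, List.orderedInsert]
      by_cases hc : y ≤ unstd y m
      · rw [if_pos hc]
        have hym : y ≤ m := le_unstd_iff.mp hc
        refine List.Forall₂.cons (by have := unstd_le x t; omega) ?_
        rw [← List.map_cons, ← List.map_cons]
        refine map_le_map _ (fun s hmem => ?_)
        rcases List.mem_cons.mp hmem with h | h
        · omega
        · exact le_trans hym (le_of_lt ((List.pairwise_cons.mp hs').1 s h))
      · rw [if_neg hc]
        have hmy : m < y := by have := le_unstd_iff (y := y) (t := m); omega
        refine List.Forall₂.cons ?_ (lemB M' x y m hmy hs')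
        have h1 := unstd_le x t
        have h2 : unstd y m = m := unstd_eq_self hmy
        omega

lemma lemA : ∀ (M : List ℕ) (x y : ℕ), x ≤ y → M.Pairwise (· < ·) →
    List.Forall₂ (· ≤ ·) ((M.map (unstd x)).orderedInsert (· ≤ ·) x)
      ((M.map (unstd y)).orderedInsert (· ≤ ·) y)
  | [], x, y, hxy, _ => by
      simpa using List.Forall₂.cons hxy List.Forall₂.nil
  | t :: M', x, y, hxy, hs => by
      have hs' : M'.Pairwise (· < ·) := (List.pairwise_cons.mp hs).2
      simp only [List.map_cons, List.orderedInsert]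
      by_cases hx : x ≤ unstd x t
      · rw [if_pos hx]
        have hxt : x ≤ t := le_unstd_iff.mp hx
        by_cases hy : y ≤ unstd y t
        · rw [if_pos hy]
          have hyt : y ≤ t := le_unstd_iff.mp hy
          refine List.Forall₂.cons hxy ?_
          rw [← List.map_cons, ← List.map_cons]
          refine map_le_map _ (fun s hmem => ?_)
          rcases List.mem_cons.mp hmem with h | h
          · omega
          · exact le_trans hyt (le_of_lt ((List.pairwise_cons.mp hs).1 s h))
        · rw [if_neg hy]
          have hty : t < y := by have := le_unstd_iff (y := y) (t := t); omega
          refine List.Forall₂.cons ?_ ?_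
          · have : unstd y t = t := unstd_eq_self hty
            omega
          · have := lemB M' x y t hty hs
            simpa using this
      · rw [if_neg hx]
        have htx : t < x := by have := le_unstd_iff (y := x) (t := t); omega
        have hty : t < y := by omega
        rw [if_neg (by have := le_unstd_iff (y := y) (t := t); omega)]
        refine List.Forall₂.cons ?_ (lemA M' x y hxy hs')
        have h1 : unstd x t = t := unstd_eq_self htx
        have h2 : unstd y t = t := unstd_eq_self hty
        omega

lemma image_unstd_std {z : ℕ} {A : Finset ℕ} (h : ∀ r ∈ A, r ≠ z) :
    (A.image (stdElt z)).image (unstd z) = A := by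
  ext u; simp only [Finset.mem_image]
  constructor
  · rintro ⟨t, ⟨r, hr, rfl⟩, rfl⟩; rw [unstd_stdElt (h r hr)]; exact hr
  · intro hu; exact ⟨stdElt z u, ⟨u, hu, rfl⟩, unstd_stdElt (h u hu)⟩

lemma image_std_unstd (z : ℕ) (A : Finset ℕ) :
    (A.image (unstd z)).image (stdElt z) = A := by
  ext u; simp only [Finset.mem_image]
  constructor
  · rintro ⟨t, ⟨r, hr, rfl⟩, rfl⟩; rw [stdElt_unstd]; exact hr
  · intro hu; exact ⟨unstd z u, ⟨u, hu, rfl⟩, stdElt_unstd z u⟩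

lemma secPlus_subset {n k : ℕ} {F : Set (Finset ℕ)} (hF : IsFamilyOn n k F)
    (hinc : IsIncreasingFamily n k F) {x y : ℕ} (hx : x ∈ board n) (hy : y ∈ board n)
    (hxy : x ≤ y) : secPlus F x ⊆ secPlus F y := by
  rintro T ⟨S, hS, hxS, rfl⟩
  obtain ⟨hSb, hSk⟩ := hF S hS
  set T0 := stdSet x (S.erase x) with hT0
  obtain ⟨hx1, hx2⟩ := Finset.mem_Icc.mp hx
  obtain ⟨hy1, hy2⟩ := Finset.mem_Icc.mp hy
  have hT0b : ∀ t ∈ T0, 1 ≤ t ∧ t ≤ n - 1 := by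
    intro t ht
    rw [hT0, stdSet] at ht
    obtain ⟨r, hr, rfl⟩ := Finset.mem_image.mp ht
    have hrx : r ≠ x := Finset.ne_of_mem_erase hr
    have hrb := Finset.mem_Icc.mp (hSb (Finset.mem_of_mem_erase hr))
    unfold stdElt; split_ifs <;> omega
  have hcardT0 : T0.card = k - 1 := by
    rw [hT0, stdSet, Finset.card_image_of_injOn, Finset.card_erase_of_mem hxS, hSk]
    intro a ha b hb hab
    have ha' : a ≠ x := Finset.ne_of_mem_erase ha
    have hb' : b ≠ x := Finset.ne_of_mem_erase hb
    calc a = unstd x (stdElt x a) := (unstd_stdElt ha').symm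
      _ = unstd x (stdElt x b) := by rw [hab]
      _ = b := unstd_stdElt hb'
  have hSeq : S = insert x (T0.image (unstd x)) := by
    rw [hT0, stdSet, image_unstd_std (fun r hr => Finset.ne_of_mem_erase hr),
      Finset.insert_erase hxS]
  have hyS' : y ∉ T0.image (unstd y) := by
    simp only [Finset.mem_image]; rintro ⟨t, _, h⟩; exact unstd_ne y t h
  set S' := insert y (T0.image (unstd y)) with hS'
  have hstd : stdSet y (S'.erase y) = T0 := by
    rw [hS', Finset.erase_insert hyS', stdSet, image_std_unstd]
  have hS'b : S' ⊆ board n := by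
    rw [hS']; intro u hu
    rcases Finset.mem_insert.mp hu with rfl | hu
    · exact hy
    · obtain ⟨t, ht, rfl⟩ := Finset.mem_image.mp hu
      have hb := hT0b t ht
      have h1 := le_unstd y t
      have h2 := unstd_le y t
      simp only [board, Finset.mem_Icc]; omega
  have hk1 : 1 ≤ k := by rw [← hSk]; exact Finset.card_pos.mpr ⟨x, hxS⟩
  have hS'k : S'.card = k := by
    rw [hS', Finset.card_insert_of_notMem hyS',
        Finset.card_image_of_injective _ (unstd_strictMono y).injective, hcardT0]
    omega
  have hle : PointwiseLE S S' := by
    unfold PointwiseLE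
    have hxim : x ∉ T0.image (unstd x) := by
      simp only [Finset.mem_image]; rintro ⟨t, _, h⟩; exact unstd_ne x t h
    rw [hSeq, hS', sort_insert' _ _ hxim, sort_insert' _ _ hyS',
        sort_image _ _ (unstd_strictMono x), sort_image _ _ (unstd_strictMono y)]
    exact lemA _ x y hxy (List.sortedLT_iff_pairwise.mp (Finset.sortedLT_sort T0))
  exact ⟨S', hinc S S' hS hS'b hS'k hle, Finset.mem_insert_self y _, hstd.symm⟩

lemma secMinus_subset {n k : ℕ} {F : Set (Finset ℕ)} (hF : IsFamilyOn n k F)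
    (hinc : IsIncreasingFamily n k F) {x y : ℕ} (hx : x ∈ board n) (hy : y ∈ board n)
    (hyx : y ≤ x) : secMinus F x ⊆ secMinus F y := by
  rintro T ⟨S, hS, hxS, rfl⟩
  obtain ⟨hSb, hSk⟩ := hF S hS
  set T0 := stdSet x S with hT0
  obtain ⟨hx1, hx2⟩ := Finset.mem_Icc.mp hx
  obtain ⟨hy1, hy2⟩ := Finset.mem_Icc.mp hy
  have hT0b : ∀ t ∈ T0, 1 ≤ t ∧ t ≤ n - 1 := by
    intro t ht
    rw [hT0, stdSet] at ht
    obtain ⟨r, hr, rfl⟩ := Finset.mem_image.mp ht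
    have hrx : r ≠ x := fun h => hxS (h ▸ hr)
    have hrb := Finset.mem_Icc.mp (hSb hr)
    unfold stdElt; split_ifs <;> omega
  have hcardT0 : T0.card = k := by
    rw [hT0, stdSet, Finset.card_image_of_injOn, hSk]
    intro a ha b hb hab
    have ha' : a ≠ x := fun h => hxS (h ▸ ha)
    have hb' : b ≠ x := fun h => hxS (h ▸ hb)
    calc a = unstd x (stdElt x a) := (unstd_stdElt ha').symm
      _ = unstd x (stdElt x b) := by rw [hab]
      _ = b := unstd_stdElt hb'
  have hSeq : S = T0.image (unstd x) := by
    rw [hT0, stdSet, image_unstd_std (fun r hr h => hxS (by rwa [h] at hr))]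
  set S' := T0.image (unstd y) with hS'
  have hyS' : y ∉ S' := by
    rw [hS']; simp only [Finset.mem_image]; rintro ⟨t, _, h⟩; exact unstd_ne y t h
  have hstd : stdSet y S' = T0 := by
    rw [hS', stdSet, image_std_unstd]
  have hS'b : S' ⊆ board n := by
    rw [hS']; intro u hu
    obtain ⟨t, ht, rfl⟩ := Finset.mem_image.mp hu
    have hb := hT0b t ht
    have h1 := le_unstd y t
    have h2 := unstd_le y t
    simp only [board, Finset.mem_Icc]; omega
  have hS'k : S'.card = k := by
    rw [hS', Finset.card_image_of_injective _ (unstd_strictMono y).injective, hcardT0]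
  have hle : PointwiseLE S S' := by
    unfold PointwiseLE
    rw [hSeq, hS', sort_image _ _ (unstd_strictMono x), sort_image _ _ (unstd_strictMono y)]
    exact forall2_map _ (fun s _ => unstd_le_unstd hyx s)
  exact ⟨S', hinc S S' hS hS'b hS'k hle, hyS', hstd.symm⟩

lemma secPlus_mono {F G : Set (Finset ℕ)} (h : F ⊆ G) (x : ℕ) :
    secPlus F x ⊆ secPlus G x := by
  rintro T ⟨S, hS, h1, h2⟩; exact ⟨S, h hS, h1, h2⟩

lemma secMinus_mono {F G : Set (Finset ℕ)} (h : F ⊆ G) (x : ℕ) :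
    secMinus F x ⊆ secMinus G x := by
  rintro T ⟨S, hS, h1, h2⟩; exact ⟨S, h hS, h1, h2⟩

lemma winsMono : ∀ n k (F G : Set (Finset ℕ)), F ⊆ G →
    (AliceWins n k F → AliceWins n k G) ∧ (BobWins n k F → BobWins n k G) := by
  intro n
  induction n using Nat.strong_induction_on with
  | _ n ih =>
    intro k F G hFG
    constructor
    · intro h
      rw [AliceWins] at h ⊢
      split_ifs at h ⊢ with hc
      · exact Set.Nonempty.mono hFG h
      · obtain ⟨x, hx, h1, h2⟩ := h
        exact ⟨x, hx, (ih (n-1) (by omega) (k-1) _ _ (secPlus_mono hFG x)).2 h1,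
          (ih (n-1) (by omega) k _ _ (secMinus_mono hFG x)).2 h2⟩
    · intro h
      rw [BobWins] at h ⊢
      split_ifs at h ⊢ with hc
      · exact Set.Nonempty.mono hFG h
      · intro x hx
        rcases h x hx with h1 | h1
        · exact Or.inl ((ih (n-1) (by omega) (k-1) _ _ (secPlus_mono hFG x)).1 h1)
        · exact Or.inr ((ih (n-1) (by omega) k _ _ (secMinus_mono hFG x)).1 h1)

/-- for an increasing family `F`, the set
`U_B(F) = {x ∈ [n] : Alice(F_x^+)}` is an upper interval of `[n]`, and
`L_B(F) = {x ∈ [n] : Alice(F_x^-)}` is a lower interval of `[n]`. -/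
theorem UB_upper_LB_lower (n k : ℕ) (hk : 0 < k) (hkn : k < n)
    (F : Set (Finset ℕ)) (hF : IsFamilyOn n k F)
    (hinc : IsIncreasingFamily n k F) :
    (∀ x y : ℕ, x ∈ board n → y ∈ board n → x ≤ y →
      AliceWins (n - 1) (k - 1) (secPlus F x) → AliceWins (n - 1) (k - 1) (secPlus F y)) ∧
    (∀ x y : ℕ, x ∈ board n → y ∈ board n → y ≤ x →
      AliceWins (n - 1) k (secMinus F x) → AliceWins (n - 1) k (secMinus F y)) := by
  constructor
  · intro x y hx hy hxy hA
    exact (winsMono (n-1) (k-1) _ _ (secPlus_subset hF hinc hx hy hxy)).1 hA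
  · intro x y hx hy hyx hA
    exact (winsMono (n-1) k _ _ (secMinus_subset hF hinc hx hy hyx)).1 hA
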